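/- arXiv:1307.5149 — 3 statements merged into one kernel-verified Lean document; each statement's English description precedes it below -/
import Mathlib

section
/- Let 0 < q < p - 1 < r, A > 0, B > 0, and C < 0. Then the function φ(t) = (A/p)t^p − (C/(q+1))t^{q+1} − (B/(r+1))t^{r+1} on (0,∞) has exactly one critical point t₁, φ is strictly increasing on (0, t₁) and strictly decreasing on (t₁, ∞), and t₁ is a global maximum of φ on (0,∞) with φ(t₁) > 0. -/
open Set

set_option maxHeartbeats 1000000 in
theorem stmt_5 (p q r A B C : ℝ) (hq : 0 < q) (hqp : q < p - 1) (hpr : p - 1 < r)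
    (hA : 0 < A) (hB : 0 < B) (hC : C < 0)
    (φ : ℝ → ℝ)
    (hφ : ∀ t, φ t = (A / p) * t ^ p - (C / (q + 1)) * t ^ (q + 1)
      - (B / (r + 1)) * t ^ (r + 1)) :
    ∃ t₁ : ℝ, 0 < t₁ ∧ deriv φ t₁ = 0 ∧
      (∀ t : ℝ, 0 < t → deriv φ t = 0 → t = t₁) ∧
      StrictMonoOn φ (Set.Ioc 0 t₁) ∧ StrictAntiOn φ (Set.Ici t₁) ∧
      (∀ t : ℝ, 0 < t → φ t ≤ φ t₁) ∧ 0 < φ t₁ := by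
  have hp1 : 1 < p := by linarith
  have hp0 : (0:ℝ) < p := by linarith
  have hq1 : (0:ℝ) < q + 1 := by linarith
  have hr1 : (0:ℝ) < r + 1 := by linarith
  set a := p - 1 - q with ha_def
  set b := r - q with hb_def
  have ha : 0 < a := by rw [ha_def]; linarith
  have hb : 0 < b := by rw [hb_def]; linarith
  have hab : a < b := by rw [ha_def, hb_def]; linarith
  have hba : 0 < b - a := by linarith
  set f : ℝ → ℝ := fun t => A * t ^ a - B * t ^ b - C with hf_def
  have hfderiv : ∀ t : ℝ, 0 < t →
      HasDerivAt f (A * (a * t ^ (a-1)) - B * (b * t ^ (b-1))) t := by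
    intro t ht
    have h1 : HasDerivAt (fun t : ℝ => A * t ^ a) (A * (a * t ^ (a-1))) t :=
      (Real.hasDerivAt_rpow_const (Or.inl ht.ne')).const_mul A
    have h2 : HasDerivAt (fun t : ℝ => B * t ^ b) (B * (b * t ^ (b-1))) t :=
      (Real.hasDerivAt_rpow_const (Or.inl ht.ne')).const_mul B
    exact (h1.sub h2).sub_const C
  have hfcont : ∀ t : ℝ, 0 < t → ContinuousAt f t :=
    fun t ht => (hfderiv t ht).continuousAt
  set s := (A*a/(B*b)) ^ (1/(b-a)) with hs_def
  have hsA : 0 < A*a/(B*b) := by positivity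
  have hs : 0 < s := Real.rpow_pos_of_pos hsA _
  have hs_pow : s ^ (b-a) = A*a/(B*b) := by
    rw [hs_def, ← Real.rpow_mul hsA.le, one_div, inv_mul_cancel₀ hba.ne', Real.rpow_one]
  have hpos : ∀ t, 0 < t → t ≤ s → 0 < f t := by
    intro t ht hts
    have h1 : t ^ (b-a) ≤ A*a/(B*b) := by
      rw [← hs_pow]; exact Real.rpow_le_rpow ht.le hts hba.le
    have h2 : t ^ b = t ^ a * t ^ (b-a) := by
      rw [← Real.rpow_add ht]; congr 1; ring
    have h3 : 0 < t ^ a := Real.rpow_pos_of_pos ht a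
    have h4 : t ^ (b-a) * (B*b) ≤ A*a := (le_div_iff₀ (by positivity)).mp h1
    have h5 : B * t ^ (b-a) < A := by nlinarith
    have h6 : B * t ^ b < A * t ^ a := by
      rw [h2]; nlinarith [mul_lt_mul_of_pos_right h5 h3]
    simp only [hf_def]
    linarith
  have hanti : StrictAntiOn f (Ici s) := by
    apply strictAntiOn_of_deriv_neg (convex_Ici s)
    · intro t ht; exact (hfcont t (hs.trans_le ht)).continuousWithinAt
    · intro t ht
      rw [interior_Ici] at ht
      have ht0 : 0 < t := hs.trans ht
      rw [(hfderiv t ht0).deriv]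
      have h1 : A*a/(B*b) < t ^ (b-a) := by
        rw [← hs_pow]; exact Real.rpow_lt_rpow hs.le ht hba
      have h2 : t ^ (b-1) = t ^ (a-1) * t ^ (b-a) := by
        rw [← Real.rpow_add ht0]; congr 1; ring
      have h3 : 0 < t ^ (a-1) := Real.rpow_pos_of_pos ht0 _
      have h4 : A*a < B*b*t^(b-a) := by
        rw [div_lt_iff₀ (by positivity)] at h1; linarith
      rw [h2]
      nlinarith [mul_lt_mul_of_pos_right h4 h3]
  set T := max 1 (((A - C + 1)/B) ^ (1/(b-a))) with hT_def
  have hACB : 0 < (A - C + 1)/B := div_pos (by linarith) hB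
  have hT1 : (1:ℝ) ≤ T := le_max_left _ _
  have hT0 : 0 < T := by linarith
  have hTpow : (A - C + 1)/B ≤ T ^ (b-a) := by
    have h1 : ((A-C+1)/B) ^ (1/(b-a)) ≤ T := le_max_right _ _
    calc (A-C+1)/B = (((A-C+1)/B) ^ (1/(b-a))) ^ (b-a) := by
          rw [← Real.rpow_mul hACB.le, one_div, inv_mul_cancel₀ hba.ne', Real.rpow_one]
      _ ≤ T ^ (b-a) := Real.rpow_le_rpow (Real.rpow_nonneg hACB.le _) h1 hba.le
  have hTa : 1 ≤ T ^ a := by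
    calc (1:ℝ) = 1 ^ a := (Real.one_rpow a).symm
      _ ≤ T ^ a := Real.rpow_le_rpow zero_le_one hT1 ha.le
  have hfT : f T < 0 := by
    have h2 : T ^ b = T ^ a * T ^ (b-a) := by
      rw [← Real.rpow_add hT0]; congr 1; ring
    have h3 : A - C + 1 ≤ B * T^(b-a) := by rw [div_le_iff₀ hB] at hTpow; linarith
    have h4 : A - B*T^(b-a) ≤ C - 1 := by linarith
    have h5 : T^a * (A - B*T^(b-a)) ≤ T^a * (C-1) :=
      mul_le_mul_of_nonneg_left h4 (by linarith)
    have h6 : T^a * (C-1) ≤ C - 1 := by nlinarith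
    simp only [hf_def]
    rw [h2]
    nlinarith [h5, h6]
  have hsT : s < T := by
    by_contra hc
    push_neg at hc
    have := hpos T hT0 hc
    linarith
  have hcont : ContinuousOn f (Icc s T) :=
    fun t ht => (hfcont t (hs.trans_le ht.1)).continuousWithinAt
  have hfs : 0 < f s := hpos s hs le_rfl
  have h0mem : (0:ℝ) ∈ Icc (f T) (f s) := ⟨hfT.le, hfs.le⟩
  obtain ⟨t₁, ht₁mem, ht₁⟩ := intermediate_value_Icc' hsT.le hcont h0mem
  have ht₁s : s < t₁ := by
    rcases eq_or_lt_of_le ht₁mem.1 with h | h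
    · exfalso; rw [← h] at ht₁; linarith
    · exact h
  have ht₁0 : 0 < t₁ := hs.trans ht₁s
  have hsign_pos : ∀ t, 0 < t → t < t₁ → 0 < f t := by
    intro t ht htlt
    rcases le_or_gt t s with h | h
    · exact hpos t ht h
    · have h2 := hanti (mem_Ici.mpr h.le) (mem_Ici.mpr ht₁s.le) htlt
      rw [ht₁] at h2
      linarith
  have hsign_neg : ∀ t, t₁ < t → f t < 0 := by
    intro t htgt
    have h2 := hanti (mem_Ici.mpr ht₁s.le) (mem_Ici.mpr (ht₁s.le.trans htgt.le)) htgt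
    rw [ht₁] at h2
    linarith
  have hφderiv : ∀ t : ℝ, 0 < t → HasDerivAt φ (t ^ q * f t) t := by
    intro t ht
    have h1 : HasDerivAt (fun t : ℝ => (A/p) * t ^ p) ((A/p) * (p * t ^ (p-1))) t :=
      (Real.hasDerivAt_rpow_const (Or.inl ht.ne')).const_mul _
    have h2 : HasDerivAt (fun t : ℝ => (C/(q+1)) * t ^ (q+1))
        ((C/(q+1)) * ((q+1) * t ^ (q+1-1))) t :=
      (Real.hasDerivAt_rpow_const (Or.inl ht.ne')).const_mul _
    have h3 : HasDerivAt (fun t : ℝ => (B/(r+1)) * t ^ (r+1))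
        ((B/(r+1)) * ((r+1) * t ^ (r+1-1))) t :=
      (Real.hasDerivAt_rpow_const (Or.inl ht.ne')).const_mul _
    have h4 := (h1.sub h2).sub h3
    have hφeq : φ = fun t => (A/p) * t ^ p - (C/(q+1)) * t ^ (q+1)
        - (B/(r+1)) * t ^ (r+1) := funext hφ
    rw [hφeq]
    convert h4 using 1
    · rfl
    · rfl
    · rfl
    have e1 : t ^ (p-1) = t ^ q * t ^ a := by
      rw [← Real.rpow_add ht]; congr 1; rw [ha_def]; ring
    have e2 : t ^ (r+1-1) = t ^ q * t ^ b := by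
      rw [← Real.rpow_add ht]; congr 1; rw [hb_def]; ring
    have e3 : t ^ (q+1-1) = t ^ q := by norm_num
    rw [e1, e2, e3]
    simp only [hf_def]
    have c1 : A / p * p = A := div_mul_cancel₀ A hp0.ne'
    have c2 : C / (q+1) * (q+1) = C := div_mul_cancel₀ C hq1.ne'
    have c3 : B / (r+1) * (r+1) = B := div_mul_cancel₀ B hr1.ne'
    linear_combination (-(t^q*t^a))*c1 + t^q*c2 + (t^q*t^b)*c3
  have hφderiv' : ∀ t : ℝ, 0 < t → deriv φ t = t ^ q * f t :=
    fun t ht => (hφderiv t ht).deriv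
  have hd0 : deriv φ t₁ = 0 := by rw [hφderiv' t₁ ht₁0, ht₁, mul_zero]
  have huniq : ∀ t : ℝ, 0 < t → deriv φ t = 0 → t = t₁ := by
    intro t ht hdt
    rw [hφderiv' t ht] at hdt
    have htq : (0:ℝ) < t ^ q := Real.rpow_pos_of_pos ht q
    have hft : f t = 0 := by
      rcases mul_eq_zero.mp hdt with h | h
      · exact absurd h htq.ne'
      · exact h
    rcases lt_trichotomy t t₁ with h | h | h
    · exact absurd hft (hsign_pos t ht h).ne'
    · exact h
    · exact absurd hft (hsign_neg t h).ne
  have hmono : StrictMonoOn φ (Ioc 0 t₁) := by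
    apply strictMonoOn_of_deriv_pos (convex_Ioc 0 t₁)
    · intro t ht; exact (hφderiv t ht.1).continuousAt.continuousWithinAt
    · intro t ht
      rw [interior_Ioc] at ht
      rw [hφderiv' t ht.1]
      exact mul_pos (Real.rpow_pos_of_pos ht.1 q) (hsign_pos t ht.1 ht.2)
  have hanti' : StrictAntiOn φ (Ici t₁) := by
    apply strictAntiOn_of_deriv_neg (convex_Ici t₁)
    · intro t ht; exact (hφderiv t (ht₁0.trans_le ht)).continuousAt.continuousWithinAt
    · intro t ht
      rw [interior_Ici] at ht
      rw [hφderiv' t (ht₁0.trans ht)]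
      exact mul_neg_of_pos_of_neg (Real.rpow_pos_of_pos (ht₁0.trans ht) q) (hsign_neg t ht)
  have hmax : ∀ t : ℝ, 0 < t → φ t ≤ φ t₁ := by
    intro t ht
    rcases lt_trichotomy t t₁ with h | h | h
    · exact (hmono ⟨ht, h.le⟩ ⟨ht₁0, le_rfl⟩ h).le
    · rw [h]
    · exact (hanti' (mem_Ici.mpr le_rfl) (mem_Ici.mpr h.le) h).le
  set K := (-C) * (r+1) / (2 * B * (q+1)) with hK_def
  have hK : 0 < K := div_pos (mul_pos (by linarith) hr1) (by positivity)
  set t₀ := min t₁ (K ^ (1/b)) with ht₀_def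
  have ht₀0 : 0 < t₀ := lt_min ht₁0 (Real.rpow_pos_of_pos hK _)
  have ht₀K : t₀ ^ b ≤ K := by
    calc t₀ ^ b ≤ (K ^ (1/b)) ^ b :=
          Real.rpow_le_rpow ht₀0.le (min_le_right _ _) hb.le
      _ = K := by rw [← Real.rpow_mul hK.le, one_div, inv_mul_cancel₀ hb.ne', Real.rpow_one]
  have hφt₀ : 0 < φ t₀ := by
    rw [hφ t₀]
    have e1 : t₀ ^ p = t₀ ^ (q+1) * t₀ ^ a := by
      rw [← Real.rpow_add ht₀0]; congr 1; rw [ha_def]; ring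
    have e2 : t₀ ^ (r+1) = t₀ ^ (q+1) * t₀ ^ b := by
      rw [← Real.rpow_add ht₀0]; congr 1; rw [hb_def]; ring
    have h1 : 0 < t₀ ^ (q+1) := Real.rpow_pos_of_pos ht₀0 _
    have h2 : 0 < t₀ ^ a := Real.rpow_pos_of_pos ht₀0 _
    have h3 : B / (r+1) * t₀ ^ b ≤ -C / (2*(q+1)) := by
      rw [div_mul_eq_mul_div, div_le_div_iff₀ hr1 (by positivity)]
      rw [hK_def, le_div_iff₀ (by positivity)] at ht₀K
      nlinarith
    have h4 : 0 < A/p * t₀^a - C/(q+1) - B/(r+1)*t₀^b := by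
      have h5 : 0 < A/p * t₀^a := by positivity
      have h6 : -C/(2*(q+1)) < -C/(q+1) := by
        rw [div_lt_div_iff₀ (by positivity) hq1]; nlinarith
      have h7 : -C/(q+1) = -(C/(q+1)) := by ring
      linarith
    rw [e1, e2]
    nlinarith [mul_pos h1 h4]
  have hφmax : 0 < φ t₁ := lt_of_lt_of_le hφt₀ (hmax t₀ ht₀0)
  exact ⟨t₁, ht₁0, hd0, huniq, hmono, hanti', hmax, hφmax⟩
end

section
/- Let 0 < q < p - 1 < r, A > 0, C > 0, and B < 0. Then the function φ(t) = (A/p)t^p − (C/(q+1))t^{q+1} − (B/(r+1))t^{r+1} on (0,∞) has exactly one critical point t₁, φ is strictly decreasing on (0, t₁) and strictly increasing on (t₁, ∞), and t₁ is a global minimum of φ on (0,∞). -/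
open Set Filter

theorem stmt_6 (p q r A B C : ℝ) (hq : 0 < q) (hqp : q < p - 1) (hpr : p - 1 < r)
    (hA : 0 < A) (hC : 0 < C) (hB : B < 0)
    (φ : ℝ → ℝ)
    (hφ : ∀ t, φ t = (A / p) * t ^ p - (C / (q + 1)) * t ^ (q + 1)
      - (B / (r + 1)) * t ^ (r + 1)) :
    ∃ t₁ : ℝ, 0 < t₁ ∧ deriv φ t₁ = 0 ∧
      (∀ t : ℝ, 0 < t → deriv φ t = 0 → t = t₁) ∧
      StrictAntiOn φ (Set.Ioc 0 t₁) ∧ StrictMonoOn φ (Set.Ici t₁) ∧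
      (∀ t : ℝ, 0 < t → φ t₁ ≤ φ t) := by
  have hφ' : φ = fun t => (A / p) * t ^ p - (C / (q + 1)) * t ^ (q + 1)
      - (B / (r + 1)) * t ^ (r + 1) := funext hφ
  subst hφ'
  have hp0 : (0:ℝ) < p := by linarith
  have hq1 : (0:ℝ) < q + 1 := by linarith
  have hr1 : (0:ℝ) < r + 1 := by linarith
  have ha : (0:ℝ) < p - 1 - q := by linarith
  have hb : (0:ℝ) < r - q := by linarith
  set g : ℝ → ℝ := fun t => A * t ^ (p - 1 - q) - B * t ^ (r - q) with hg
  -- derivative formula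
  have hder : ∀ t : ℝ, 0 < t → HasDerivAt (fun t => (A / p) * t ^ p
      - (C / (q + 1)) * t ^ (q + 1) - (B / (r + 1)) * t ^ (r + 1))
      (t ^ q * (g t - C)) t := by
    intro t ht
    have h1 := (Real.hasDerivAt_rpow_const (x := t) (p := p) (Or.inl ht.ne')).const_mul (A/p)
    have h2 := (Real.hasDerivAt_rpow_const (x := t) (p := q+1) (Or.inl ht.ne')).const_mul (C/(q+1))
    have h3 := (Real.hasDerivAt_rpow_const (x := t) (p := r+1) (Or.inl ht.ne')).const_mul (B/(r+1))
    have h := (h1.sub h2).sub h3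
    rw [show q + 1 - 1 = q from by ring, show r + 1 - 1 = r from by ring] at h
    refine h.congr_deriv ?_
    symm
    have eA : t ^ q * t ^ (p - 1 - q) = t ^ (p - 1) := by
      rw [← Real.rpow_add ht, show q + (p - 1 - q) = p - 1 from by ring]
    have eB : t ^ q * t ^ (r - q) = t ^ r := by
      rw [← Real.rpow_add ht, show q + (r - q) = r from by ring]
    calc t ^ q * (g t - C)
        = A * (t ^ q * t ^ (p - 1 - q)) - B * (t ^ q * t ^ (r - q)) - C * t ^ q := by
          simp only [hg]; ring
      _ = A * t ^ (p - 1) - B * t ^ r - C * t ^ q := by rw [eA, eB]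
      _ = A / p * (p * t ^ (p - 1)) - C / (q + 1) * ((q + 1) * t ^ q)
          - B / (r + 1) * ((r + 1) * t ^ r) := by field_simp; ring
  have hderiv : ∀ t : ℝ, 0 < t → deriv (fun t => (A / p) * t ^ p
      - (C / (q + 1)) * t ^ (q + 1) - (B / (r + 1)) * t ^ (r + 1)) t
      = t ^ q * (g t - C) := fun t ht => (hder t ht).deriv
  -- g strictly monotone on Ici 0
  have hgmono : StrictMonoOn g (Ici 0) := by
    intro x hx y _ hxy
    have h1 : x ^ (p - 1 - q) < y ^ (p - 1 - q) := Real.rpow_lt_rpow hx hxy ha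
    have h2 : x ^ (r - q) < y ^ (r - q) := Real.rpow_lt_rpow hx hxy hb
    simp only [hg]
    nlinarith
  -- g continuous
  have hgcont : Continuous g := by
    have c1 : Continuous fun t : ℝ => t ^ (p - 1 - q) :=
      continuous_iff_continuousAt.2 fun x => Real.continuousAt_rpow_const x _ (Or.inr ha.le)
    have c2 : Continuous fun t : ℝ => t ^ (r - q) :=
      continuous_iff_continuousAt.2 fun x => Real.continuousAt_rpow_const x _ (Or.inr hb.le)
    exact (continuous_const.mul c1).sub (continuous_const.mul c2)
  have hg0 : g 0 = 0 := by
    simp only [hg]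
    rw [Real.zero_rpow ha.ne', Real.zero_rpow hb.ne']
    ring
  -- find T with g T ≥ C
  have htend : Tendsto (fun t : ℝ => A * t ^ (p - 1 - q)) atTop atTop :=
    (tendsto_rpow_atTop ha).const_mul_atTop hA
  obtain ⟨T, hT⟩ := ((htend.eventually_ge_atTop C).and (eventually_ge_atTop 1)).exists
  have hT0 : (0:ℝ) < T := lt_of_lt_of_le one_pos hT.2
  have hgT : C ≤ g T := by
    have hnb : 0 ≤ -B * T ^ (r - q) :=
      mul_nonneg (by linarith) (Real.rpow_nonneg hT0.le _)
    simp only [hg]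
    linarith [hT.1]
  -- IVT
  obtain ⟨t₁, ht₁mem, ht₁⟩ := intermediate_value_Icc hT0.le hgcont.continuousOn
    (by rw [hg0]; exact ⟨hC.le, hgT⟩)
  have ht₁pos : 0 < t₁ := by
    rcases lt_or_eq_of_le ht₁mem.1 with h | h
    · exact h
    · exfalso; rw [← h, hg0] at ht₁; linarith
  refine ⟨t₁, ht₁pos, ?_, ?_, ?_, ?_, ?_⟩
  · rw [hderiv t₁ ht₁pos, ht₁]; ring
  · intro t ht h0
    rw [hderiv t ht] at h0
    have tq : (0:ℝ) < t ^ q := Real.rpow_pos_of_pos ht q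
    have hgt : g t = C := by
      rcases mul_eq_zero.1 h0 with h | h
      · exact absurd h tq.ne'
      · linarith
    exact hgmono.injOn ht.le ht₁pos.le (by rw [hgt, ht₁])
  · apply strictAntiOn_of_deriv_neg (convex_Ioc 0 t₁)
    · exact fun t ht => ((hder t ht.1).continuousAt).continuousWithinAt
    · rw [interior_Ioc]
      intro t ht
      rw [hderiv t ht.1]
      have hlt : g t < g t₁ := hgmono ht.1.le ht₁pos.le ht.2
      rw [ht₁] at hlt
      exact mul_neg_of_pos_of_neg (Real.rpow_pos_of_pos ht.1 q) (by linarith)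
  · apply strictMonoOn_of_deriv_pos (convex_Ici t₁)
    · exact fun t ht =>
        ((hder t (lt_of_lt_of_le ht₁pos ht)).continuousAt).continuousWithinAt
    · rw [interior_Ici]
      intro t ht
      have ht0 : 0 < t := lt_trans ht₁pos ht
      rw [hderiv t ht0]
      have hlt : g t₁ < g t := hgmono ht₁pos.le ht0.le ht
      rw [ht₁] at hlt
      exact mul_pos (Real.rpow_pos_of_pos ht0 q) (by linarith)
  · intro t ht
    rcases lt_trichotomy t t₁ with h | h | h
    · have anti : StrictAntiOn (fun t => (A / p) * t ^ p - (C / (q + 1)) * t ^ (q + 1)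
          - (B / (r + 1)) * t ^ (r + 1)) (Set.Ioc 0 t₁) := by
        apply strictAntiOn_of_deriv_neg (convex_Ioc 0 t₁)
        · exact fun t ht => ((hder t ht.1).continuousAt).continuousWithinAt
        · rw [interior_Ioc]
          intro t ht
          rw [hderiv t ht.1]
          have hlt : g t < g t₁ := hgmono ht.1.le ht₁pos.le ht.2
          rw [ht₁] at hlt
          exact mul_neg_of_pos_of_neg (Real.rpow_pos_of_pos ht.1 q) (by linarith)
      exact (anti ⟨ht, h.le⟩ ⟨ht₁pos, le_refl _⟩ h).le
    · rw [h]
    · have mono : StrictMonoOn (fun t => (A / p) * t ^ p - (C / (q + 1)) * t ^ (q + 1)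
          - (B / (r + 1)) * t ^ (r + 1)) (Set.Ici t₁) := by
        apply strictMonoOn_of_deriv_pos (convex_Ici t₁)
        · exact fun t ht =>
            ((hder t (lt_of_lt_of_le ht₁pos ht)).continuousAt).continuousWithinAt
        · rw [interior_Ici]
          intro t ht
          have ht0 : 0 < t := lt_trans ht₁pos ht
          rw [hderiv t ht0]
          have hlt : g t₁ < g t := hgmono ht₁pos.le ht0.le ht
          rw [ht₁] at hlt
          exact mul_pos (Real.rpow_pos_of_pos ht0 q) (by linarith)
      exact (mono (le_refl t₁) h.le h).le
end

section
/- Let 0 < q < p - 1 < r and A, B, C > 0. If C < max_{t>0} m(t) where m(t) = A t^{p-1-q} − B t^{r-q}, then the function φ(t) = (A/p)t^p − (C/(q+1))t^{q+1} − (B/(r+1))t^{r+1} has exactly two critical points 0 < t₁ < t₂ on (0,∞), with t₁ a local minimum and t₂ a local maximum of φ. -/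
set_option maxHeartbeats 1000000


theorem stmt_7 (p q r A B C : ℝ) (hq : 0 < q) (hqp : q < p - 1) (hpr : p - 1 < r)
    (hA : 0 < A) (hB : 0 < B) (hC : 0 < C)
    (m : ℝ → ℝ) (hm : ∀ t, m t = A * t ^ (p - 1 - q) - B * t ^ (r - q))
    (hCmax : ∃ t : ℝ, 0 < t ∧ C < m t)
    (φ : ℝ → ℝ)
    (hφ : ∀ t, φ t = (A / p) * t ^ p - (C / (q + 1)) * t ^ (q + 1)
      - (B / (r + 1)) * t ^ (r + 1)) :
    ∃ t₁ t₂ : ℝ, 0 < t₁ ∧ t₁ < t₂ ∧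
      deriv φ t₁ = 0 ∧ deriv φ t₂ = 0 ∧
      (∀ t : ℝ, 0 < t → deriv φ t = 0 → t = t₁ ∨ t = t₂) ∧
      IsLocalMin φ t₁ ∧ IsLocalMax φ t₂ := by
  have hα : 0 < p - 1 - q := by linarith
  have hβ : 0 < r - q := by linarith
  have hδ : 0 < r - p + 1 := by linarith
  -- continuity helper
  have hcont : ∀ c : ℝ, 0 < c → Continuous fun t : ℝ => t ^ c := by
    intro c hc
    rw [continuous_iff_continuousAt]
    intro x
    exact Real.continuousAt_rpow_const x c (Or.inr hc.le)
  have hmc : Continuous m := by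
    have : m = fun t => A * t ^ (p - 1 - q) - B * t ^ (r - q) := funext hm
    rw [this]
    exact (continuous_const.mul (hcont _ hα)).sub (continuous_const.mul (hcont _ hβ))
  have hφc : Continuous φ := by
    have : φ = fun t => (A / p) * t ^ p - (C / (q + 1)) * t ^ (q + 1)
        - (B / (r + 1)) * t ^ (r + 1) := funext hφ
    rw [this]
    exact ((continuous_const.mul (hcont _ (by linarith))).sub
      (continuous_const.mul (hcont _ (by linarith)))).sub
      (continuous_const.mul (hcont _ (by linarith)))
  -- derivative of m
  have hmd : ∀ t : ℝ, 0 < t → HasDerivAt m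
      (t ^ (p - 1 - q - 1) * (A * (p - 1 - q) - B * (r - q) * t ^ (r - p + 1))) t := by
    intro t ht
    have h1 : HasDerivAt (fun t : ℝ => A * t ^ (p - 1 - q))
        (A * ((p - 1 - q) * t ^ (p - 1 - q - 1))) t :=
      (Real.hasDerivAt_rpow_const (Or.inl ht.ne')).const_mul A
    have h2 : HasDerivAt (fun t : ℝ => B * t ^ (r - q))
        (B * ((r - q) * t ^ (r - q - 1))) t :=
      (Real.hasDerivAt_rpow_const (Or.inl ht.ne')).const_mul B
    have h3 := h1.sub h2
    have hfun : m = fun t => A * t ^ (p - 1 - q) - B * t ^ (r - q) := funext hm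
    rw [hfun]
    convert h3 using 1
    case e'_4 => rfl
    case e'_5 => rfl
    case e'_8 => rfl
    have e : t ^ (r - q - 1) = t ^ (p - 1 - q - 1) * t ^ (r - p + 1) := by
      rw [← Real.rpow_add ht]; ring_nf
    rw [e]; ring
  -- derivative of φ
  have hd : ∀ t : ℝ, 0 < t → HasDerivAt φ (t ^ q * (m t - C)) t := by
    intro t ht
    have h1 : HasDerivAt (fun t : ℝ => (A / p) * t ^ p) ((A / p) * (p * t ^ (p - 1))) t :=
      (Real.hasDerivAt_rpow_const (Or.inl ht.ne')).const_mul _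
    have h2 : HasDerivAt (fun t : ℝ => (C / (q + 1)) * t ^ (q + 1))
        ((C / (q + 1)) * ((q + 1) * t ^ (q + 1 - 1))) t :=
      (Real.hasDerivAt_rpow_const (Or.inl ht.ne')).const_mul _
    have h3 : HasDerivAt (fun t : ℝ => (B / (r + 1)) * t ^ (r + 1))
        ((B / (r + 1)) * ((r + 1) * t ^ (r + 1 - 1))) t :=
      (Real.hasDerivAt_rpow_const (Or.inl ht.ne')).const_mul _
    have h4 := (h1.sub h2).sub h3
    have hfun : φ = fun t => (A / p) * t ^ p - (C / (q + 1)) * t ^ (q + 1)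
        - (B / (r + 1)) * t ^ (r + 1) := funext hφ
    rw [hfun]
    convert h4 using 1
    case e'_4 => rfl
    case e'_5 => rfl
    case e'_8 => rfl
    rw [hm t]
    have e1 : t ^ (p - 1) = t ^ q * t ^ (p - 1 - q) := by
      rw [← Real.rpow_add ht]; ring_nf
    have e2 : t ^ (r + 1 - 1) = t ^ q * t ^ (r - q) := by
      rw [← Real.rpow_add ht]; ring_nf
    have e3 : q + 1 - 1 = q := by ring
    rw [e1, e2, e3]
    have hp0 : p ≠ 0 := by nlinarith
    have hq1 : q + 1 ≠ 0 := by linarith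
    have hr1 : r + 1 ≠ 0 := by linarith
    field_simp
    ring
  -- the critical point of m
  set ts : ℝ := (A * (p - 1 - q) / (B * (r - q))) ^ (r - p + 1)⁻¹ with hts_def
  have hbase : 0 < A * (p - 1 - q) / (B * (r - q)) := by positivity
  have hts : 0 < ts := Real.rpow_pos_of_pos hbase _
  have htspow : ts ^ (r - p + 1) = A * (p - 1 - q) / (B * (r - q)) :=
    Real.rpow_inv_rpow hbase.le hδ.ne'
  -- m strictly monotone on [0, ts], strictly antitone on [ts, ∞)
  have hmono : StrictMonoOn m (Set.Icc 0 ts) := by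
    apply strictMonoOn_of_deriv_pos (convex_Icc _ _) hmc.continuousOn
    intro t htmem
    rw [interior_Icc] at htmem
    rw [(hmd t htmem.1).deriv]
    have h1 : t ^ (r - p + 1) < ts ^ (r - p + 1) :=
      Real.rpow_lt_rpow htmem.1.le htmem.2 hδ
    rw [htspow] at h1
    have h2 : B * (r - q) * t ^ (r - p + 1) < A * (p - 1 - q) := by
      rw [lt_div_iff₀ (by positivity)] at h1
      linarith [h1]
    have h3 : 0 < t ^ (p - 1 - q - 1) := Real.rpow_pos_of_pos htmem.1 _
    nlinarith
  have hanti : StrictAntiOn m (Set.Ici ts) := by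
    apply strictAntiOn_of_deriv_neg (convex_Ici _) hmc.continuousOn
    intro t htmem
    rw [interior_Ici] at htmem
    have ht : 0 < t := lt_trans hts htmem
    rw [(hmd t ht).deriv]
    have h1 : ts ^ (r - p + 1) < t ^ (r - p + 1) :=
      Real.rpow_lt_rpow hts.le htmem hδ
    rw [htspow] at h1
    have h2 : A * (p - 1 - q) < B * (r - q) * t ^ (r - p + 1) := by
      rw [div_lt_iff₀ (by positivity)] at h1
      linarith [h1]
    have h3 : 0 < t ^ (p - 1 - q - 1) := Real.rpow_pos_of_pos ht _
    nlinarith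
  -- roots of m = C
  obtain ⟨t₀, ht₀, hCt₀⟩ := hCmax
  have hm0 : m 0 = 0 := by
    rw [hm]
    rw [Real.zero_rpow hα.ne', Real.zero_rpow hβ.ne']
    ring
  obtain ⟨t₁, ht₁mem, hmt₁⟩ : ∃ t₁ ∈ Set.Ioo 0 t₀, m t₁ = C :=
    intermediate_value_Ioo ht₀.le hmc.continuousOn ⟨by rw [hm0]; exact hC, hCt₀⟩
  set T : ℝ := max t₀ ((A / B) ^ (r - p + 1)⁻¹) + 1 with hT_def
  have hT₀ : t₀ < T := by
    rw [hT_def]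
    have := le_max_left t₀ ((A / B) ^ (r - p + 1)⁻¹)
    linarith
  have hTpos : 0 < T := lt_trans ht₀ hT₀
  have hmT : m T < C := by
    have hAB : (0:ℝ) ≤ A / B := by positivity
    have h1 : (A / B) ^ (r - p + 1)⁻¹ < T := by
      rw [hT_def]
      have := le_max_right t₀ ((A / B) ^ (r - p + 1)⁻¹)
      linarith
    have h2 : ((A / B) ^ (r - p + 1)⁻¹) ^ (r - p + 1) < T ^ (r - p + 1) :=
      Real.rpow_lt_rpow (Real.rpow_nonneg hAB _) h1 hδ
    rw [Real.rpow_inv_rpow hAB hδ.ne'] at h2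
    have h3 : A < B * T ^ (r - p + 1) := by
      rw [div_lt_iff₀ hB] at h2
      linarith [h2]
    have h4 : m T < 0 := by
      rw [hm]
      have e : T ^ (r - q) = T ^ (p - 1 - q) * T ^ (r - p + 1) := by
        rw [← Real.rpow_add hTpos]; ring_nf
      rw [e]
      have h5 : 0 < T ^ (p - 1 - q) := Real.rpow_pos_of_pos hTpos _
      nlinarith
    linarith
  obtain ⟨t₂, ht₂mem, hmt₂⟩ : ∃ t₂ ∈ Set.Ioo t₀ T, m t₂ = C :=
    intermediate_value_Ioo' hT₀.le hmc.continuousOn ⟨hmT, hCt₀⟩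
  have ht₁pos : 0 < t₁ := ht₁mem.1
  have ht₂pos : 0 < t₂ := lt_trans ht₀ ht₂mem.1
  have ht₁t₂ : t₁ < t₂ := lt_trans ht₁mem.2 ht₂mem.1
  -- t₁ < ts < t₂
  have ht₁ts : t₁ < ts := by
    by_contra h
    push_neg at h
    have := hanti h (le_trans h ht₁mem.2.le) ht₁mem.2
    rw [hmt₁] at this
    linarith
  have htst₂ : ts < t₂ := by
    by_contra h
    push_neg at h
    have := hmono ⟨ht₀.le, le_trans ht₂mem.1.le h⟩ ⟨ht₂pos.le, h⟩ ht₂mem.1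
    rw [hmt₂] at this
    linarith
  -- sign facts
  have hsign1 : ∀ t : ℝ, 0 < t → t < t₁ → m t < C := by
    intro t ht htlt
    have := hmono ⟨ht.le, by linarith⟩ ⟨ht₁pos.le, ht₁ts.le⟩ htlt
    rw [hmt₁] at this; exact this
  have hsign2 : ∀ t : ℝ, t₁ < t → t < t₂ → C < m t := by
    intro t h1 h2
    rcases le_total t ts with h | h
    · have := hmono ⟨ht₁pos.le, ht₁ts.le⟩ ⟨by linarith, h⟩ h1
      rw [hmt₁] at this; exact this
    · have := hanti h (by linarith : ts ≤ t₂) h2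
      rw [hmt₂] at this; exact this
  have hsign3 : ∀ t : ℝ, t₂ < t → m t < C := by
    intro t h1
    have := hanti htst₂.le (by linarith : ts ≤ t) h1
    rw [hmt₂] at this; exact this
  -- critical points
  refine ⟨t₁, t₂, ht₁pos, ht₁t₂, ?_, ?_, ?_, ?_, ?_⟩
  · rw [(hd t₁ ht₁pos).deriv, hmt₁]; ring
  · rw [(hd t₂ ht₂pos).deriv, hmt₂]; ring
  · intro t ht hder
    rw [(hd t ht).deriv] at hder
    have htq : (0:ℝ) < t ^ q := Real.rpow_pos_of_pos ht _
    have hmtC : m t = C := by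
      rcases mul_eq_zero.1 hder with h | h
      · exact absurd h htq.ne'
      · linarith
    rcases lt_trichotomy t t₁ with h | h | h
    · exact absurd hmtC (by have := hsign1 t ht h; linarith)
    · exact Or.inl h
    · rcases lt_trichotomy t t₂ with h' | h' | h'
      · exact absurd hmtC (by have := hsign2 t h h'; linarith)
      · exact Or.inr h'
      · exact absurd hmtC (by have := hsign3 t h'; linarith)
  -- local min at t₁
  · have hA1 : StrictAntiOn φ (Set.Icc (t₁ / 2) t₁) := by
      apply strictAntiOn_of_deriv_neg (convex_Icc _ _) hφc.continuousOn
      intro t htmem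
      rw [interior_Icc] at htmem
      have ht : 0 < t := lt_of_le_of_lt (by linarith : (0:ℝ) ≤ t₁ / 2) htmem.1
      rw [(hd t ht).deriv]
      have h1 := hsign1 t ht htmem.2
      have h2 : (0:ℝ) < t ^ q := Real.rpow_pos_of_pos ht _
      nlinarith
    have hM1 : StrictMonoOn φ (Set.Icc t₁ t₂) := by
      apply strictMonoOn_of_deriv_pos (convex_Icc _ _) hφc.continuousOn
      intro t htmem
      rw [interior_Icc] at htmem
      have ht : 0 < t := lt_trans ht₁pos htmem.1
      rw [(hd t ht).deriv]
      have h1 := hsign2 t htmem.1 htmem.2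
      have h2 : (0:ℝ) < t ^ q := Real.rpow_pos_of_pos ht _
      nlinarith
    have hmemnhds : Set.Ioo (t₁ / 2) t₂ ∈ nhds t₁ :=
      Ioo_mem_nhds (by linarith) ht₁t₂
    filter_upwards [hmemnhds] with t ht
    rcases lt_trichotomy t t₁ with h | h | h
    · exact (hA1 ⟨ht.1.le, h.le⟩ ⟨by linarith, le_rfl⟩ h).le
    · rw [h]
    · exact (hM1 ⟨le_rfl, ht₁t₂.le⟩ ⟨h.le, ht.2.le⟩ h).le
  -- local max at t₂
  · have hM1 : StrictMonoOn φ (Set.Icc t₁ t₂) := by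
      apply strictMonoOn_of_deriv_pos (convex_Icc _ _) hφc.continuousOn
      intro t htmem
      rw [interior_Icc] at htmem
      have ht : 0 < t := lt_trans ht₁pos htmem.1
      rw [(hd t ht).deriv]
      have h1 := hsign2 t htmem.1 htmem.2
      have h2 : (0:ℝ) < t ^ q := Real.rpow_pos_of_pos ht _
      nlinarith
    have hA2 : StrictAntiOn φ (Set.Icc t₂ (t₂ + 1)) := by
      apply strictAntiOn_of_deriv_neg (convex_Icc _ _) hφc.continuousOn
      intro t htmem
      rw [interior_Icc] at htmem
      have ht : 0 < t := lt_trans ht₂pos htmem.1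
      rw [(hd t ht).deriv]
      have h1 := hsign3 t htmem.1
      have h2 : (0:ℝ) < t ^ q := Real.rpow_pos_of_pos ht _
      nlinarith
    have hmemnhds : Set.Ioo t₁ (t₂ + 1) ∈ nhds t₂ :=
      Ioo_mem_nhds ht₁t₂ (by linarith)
    filter_upwards [hmemnhds] with t ht
    rcases lt_trichotomy t t₂ with h | h | h
    · exact (hM1 ⟨ht.1.le, h.le⟩ ⟨ht₁t₂.le, le_rfl⟩ h).le
    · rw [h]
    · exact (hA2 ⟨le_rfl, by linarith⟩ ⟨h.le, ht.2.le⟩ h).le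
end
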